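/- Fix a differentiable function h : ℝ → ℝ whose derivative h' is 1-periodic and satisfies the eggbeater profile conditions, and let A > 1. Then there exist points p, q ∈ ℝ² such that the lifted eggbeater map satisfies G_A(p) = p + (1, 0) and G_A(q) = q + (0, 1); that is, the induced eggbeater map on the torus (ℝ/ℤ)² has a fixed point in the free homotopy class of the horizontal loop and a fixed point in the free homotopy class of the vertical loop. -/

import Mathlib

/-- The lifted flow `Φ_A (x, y) = (x + A·h'(y), y)`. -/
noncomputable def PhiLift (h : ℝ → ℝ) (A : ℝ) : ℝ × ℝ → ℝ × ℝ :=
  fun p => (p.1 + A * deriv h p.2, p.2)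

/-- The lifted flow `Ψ_{2A} (x, y) = (x, y − 2A·h'(x))`. -/
noncomputable def PsiLift (h : ℝ → ℝ) (A : ℝ) : ℝ × ℝ → ℝ × ℝ :=
  fun p => (p.1, p.2 - 2 * A * deriv h p.1)

/-- The lifted eggbeater map `G_A = Ψ_{2A} ∘ Φ_A`. -/
noncomputable def EggbeaterLift (h : ℝ → ℝ) (A : ℝ) : ℝ × ℝ → ℝ × ℝ :=
  PsiLift h A ∘ PhiLift h A

/-- Let `h : ℝ → ℝ` be differentiable with `1`-periodic derivative `h'`
satisfying the eggbeater profile conditions, and let `A > 1`.  Then there exist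
`p, q ∈ ℝ²` with `G_A p = p + (1, 0)` and `G_A q = q + (0, 1)`: the induced eggbeater
map on the torus `(ℝ/ℤ)²` has a fixed point in the free homotopy class of the
horizontal loop and one in the class of the vertical loop. -/
theorem eggbeater_has_horizontal_and_vertical_fixed_points
    (h : ℝ → ℝ) (hdiff : Differentiable ℝ h)
    (hper : ∀ t : ℝ, deriv h (t + 1) = deriv h t)
    (hcont : Continuous (deriv h))
    (hlin0 : ∀ t : ℝ, |t| ≤ 0.01 → deriv h t = -100 * t)
    (hlinhalf : ∀ t : ℝ, |t - 1/2| ≤ 0.01 → deriv h t = 100 * (t - 1/2))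
    (hflatneg : ∀ t ∈ Set.Icc (1/8 : ℝ) (3/8), deriv h t = -5)
    (hflatpos : ∀ t ∈ Set.Icc (5/8 : ℝ) (7/8), deriv h t = 5)
    (hanti : StrictAntiOn (deriv h) (Set.Icc (-(1/8) : ℝ) (1/8)))
    (hmono : StrictMonoOn (deriv h) (Set.Icc (3/8 : ℝ) (5/8)))
    (A : ℝ) (hA : 1 < A) :
    ∃ p q : ℝ × ℝ,
      EggbeaterLift h A p = p + ((1 : ℝ), (0 : ℝ)) ∧
      EggbeaterLift h A q = q + ((0 : ℝ), (1 : ℝ)) := by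
  have hA0 : (0:ℝ) < A := by linarith
  have h'0 : deriv h 0 = 0 := by
    have := hlin0 0 (by norm_num); simpa using this
  have h'1 : deriv h 1 = 0 := by
    have := hper 0; simpa [h'0] using this
  refine ⟨(0, 1/2 + 1/(100*A)), (1/(200*A), 0), ?_, ?_⟩
  · have hy : deriv h (1/2 + 1/(100*A)) = 1/A := by
      rw [hlinhalf]
      · field_simp; ring
      · rw [show (1/2 + 1/(100*A) - 1/2) = 1/(100*A) by ring,
          abs_of_pos (by positivity)]
        rw [div_le_iff₀ (by positivity)]
        norm_num; linarith
    have hAy : A * deriv h (1/2 + 1/(100*A)) = 1 := by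
      rw [hy]; field_simp
    simp only [EggbeaterLift, PsiLift, PhiLift, Function.comp_apply,
      Prod.mk_add_mk, Prod.mk.injEq, hAy]
    constructor
    · trivial
    · rw [show (0:ℝ) + 1 = 1 by ring, h'1]; ring
  · have hx : deriv h (1/(200*A)) = -(1/(2*A)) := by
      rw [hlin0]
      · field_simp; ring
      · rw [abs_of_pos (by positivity), div_le_iff₀ (by positivity)]
        norm_num; linarith
    simp only [EggbeaterLift, PsiLift, PhiLift, Function.comp_apply,
      Prod.mk_add_mk, Prod.mk.injEq, h'0]
    constructor
    · ring
    · rw [show (1/(200*A) + A * 0) = 1/(200*A) by ring, hx]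
      field_simp
      ring
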